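/- arXiv:0805.1979 — 3 statements merged into one kernel-verified Lean document; each statement's English description precedes it below -/
import Mathlib

section
/- There is no loop x : S¹ → GL(n,ℂ) of the form x = x₋ · D · x₊ with x₋ ∈ Λ⁻GL(n,ℂ), x₊ ∈ Λ⁺GL(n,ℂ), D(λ) = diag(λ^{k₁},…,λ^{kₙ}) with k₁ ≥ ⋯ ≥ kₙ integers not all zero, such that x satisfies the reality condition x(λ) = (conj(x(conj λ))ᵀ)⁻¹. -/
open Complex Metric Matrix Finset Asymptotics Filter Set Real

attribute [local instance] Matrix.linftyOpNormedAddCommGroup Matrix.linftyOpNormedSpace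
  Matrix.linftyOpNormedRing Matrix.linftyOpNormedAlgebra

/-- A loop `S¹ → GL(n,ℂ)` extending holomorphically to the closed unit disc with
invertible values (an element of `Λ⁺GL(n,ℂ)`, via its extension): entrywise
continuity on the closed disc, entrywise holomorphy on the open disc, invertibility. -/
def HolDisc (n : ℕ) (f : ℂ → Matrix (Fin n) (Fin n) ℂ) : Prop :=
  (∀ i j, ContinuousOn (fun z => f z i j) (Metric.closedBall 0 1)) ∧
    (∀ i j, DifferentiableOn ℂ (fun z => f z i j) (Metric.ball 0 1)) ∧
    ∀ z ∈ Metric.closedBall (0 : ℂ) 1, IsUnit (f z)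




private lemma hasDerivAt_conj_conj {f : ℂ → ℂ} {f' z : ℂ}
    (hf : HasDerivAt f f' (star z)) :
    HasDerivAt (fun w => star (f (star w)) : ℂ → ℂ) (star f') z := by
  rw [hasDerivAt_iff_isLittleO_nhds_zero] at hf ⊢
  have hc : Tendsto (fun h : ℂ => (star h : ℂ)) (nhds 0) (nhds 0) := by
    simpa using (continuous_star : Continuous (star : ℂ → ℂ)).tendsto (0 : ℂ)
  have h2 := hf.comp_tendsto hc
  rw [isLittleO_iff] at h2 ⊢
  intro c hc'
  filter_upwards [h2 hc'] with h hh
  have key : star (f (star (z + h))) - star (f (star z)) - h • star f'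
      = star (f (star z + star h) - f (star z) - star h • f') := by
    simp only [star_add, star_sub, smul_eq_mul, star_mul', star_star]
  calc ‖star (f (star (z + h))) - star (f (star z)) - h • star f'‖
      = ‖f (star z + star h) - f (star z) - star h • f'‖ := by rw [key, norm_star]
    _ ≤ c * ‖star h‖ := by simpa using hh
    _ = c * ‖h‖ := by rw [norm_star]

private lemma diffOn_conj_conj {f : ℂ → ℂ}
    (hf : DifferentiableOn ℂ f (ball (0:ℂ) 1)) :
    DifferentiableOn ℂ (fun z => star (f (star z))) (ball (0:ℂ) 1) := by
  intro z hz
  have hz' : (star z : ℂ) ∈ ball (0:ℂ) 1 := by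
    simpa [mem_ball_zero_iff] using hz
  have h1 := (hf.differentiableAt (isOpen_ball.mem_nhds hz')).hasDerivAt
  exact (hasDerivAt_conj_conj h1).differentiableAt.differentiableWithinAt

private lemma contOn_conj_conj {f : ℂ → ℂ}
    (hf : ContinuousOn f (closedBall (0:ℂ) 1)) :
    ContinuousOn (fun z => star (f (star z))) (closedBall (0:ℂ) 1) := by
  apply continuous_star.comp_continuousOn
  apply hf.comp continuous_star.continuousOn
  intro z hz
  simpa [mem_closedBall_zero_iff] using hz

private lemma contOn_matrix {N : ℕ} {f : ℂ → Matrix (Fin N) (Fin N) ℂ} {s : Set ℂ}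
    (h : ∀ i j, ContinuousOn (fun z => f z i j) s) : ContinuousOn f s := by
  have e : ∀ z : ℂ, f z = ∑ i : Fin N, ∑ j : Fin N, (f z i j) • Matrix.single i j (1:ℂ) := by
    intro z
    conv_lhs => rw [matrix_eq_sum_single (f z)]
    refine Finset.sum_congr rfl fun i _ => Finset.sum_congr rfl fun j _ => ?_
    rw [Matrix.smul_single, smul_eq_mul, mul_one]
  have : ContinuousOn (fun z => ∑ i : Fin N, ∑ j : Fin N, (f z i j) • Matrix.single i j (1:ℂ)) s := by
    apply continuousOn_finset_sum
    intro i _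
    apply continuousOn_finset_sum
    intro j _
    exact (h i j).smul continuousOn_const
  exact this.congr fun z _ => e z

private lemma diffOn_matrix {N : ℕ} {f : ℂ → Matrix (Fin N) (Fin N) ℂ} {s : Set ℂ}
    (h : ∀ i j, DifferentiableOn ℂ (fun z => f z i j) s) : DifferentiableOn ℂ f s := by
  have e : ∀ z : ℂ, f z = ∑ i : Fin N, ∑ j : Fin N, (f z i j) • Matrix.single i j (1:ℂ) := by
    intro z
    conv_lhs => rw [matrix_eq_sum_single (f z)]
    refine Finset.sum_congr rfl fun i _ => Finset.sum_congr rfl fun j _ => ?_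
    rw [Matrix.smul_single, smul_eq_mul, mul_one]
  have hd : DifferentiableOn ℂ (fun z => ∑ i : Fin N, ∑ j : Fin N, (f z i j) • Matrix.single i j (1:ℂ)) s := by
    apply DifferentiableOn.fun_sum
    intro i _
    apply DifferentiableOn.fun_sum
    intro j _
    exact (h i j).smul_const _
  exact hd.congr fun z hz => e z

private noncomputable def entryCLM {N : ℕ} (i j : Fin N) : Matrix (Fin N) (Fin N) ℂ →L[ℂ] ℂ :=
  LinearMap.toContinuousLinearMap
    { toFun := fun M => M i j
      map_add' := fun _ _ => rfl
      map_smul' := fun _ _ => rfl }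

private lemma inv_entry_regular {N : ℕ} {f : ℂ → Matrix (Fin N) (Fin N) ℂ}
    (hc : ∀ i j, ContinuousOn (fun z => f z i j) (closedBall 0 1))
    (hd : ∀ i j, DifferentiableOn ℂ (fun z => f z i j) (ball 0 1))
    (hu : ∀ z ∈ closedBall (0:ℂ) 1, IsUnit (f z)) (i j : Fin N) :
    ContinuousOn (fun z => (f z)⁻¹ i j) (closedBall (0:ℂ) 1) ∧
      DifferentiableOn ℂ (fun z => (f z)⁻¹ i j) (ball (0:ℂ) 1) := by
  have hinv : ∀ z : ℂ, (f z)⁻¹ = Ring.inverse (f z) := fun z =>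
    Matrix.nonsing_inv_eq_ringInverse _
  have hFc : ContinuousOn f (closedBall 0 1) := contOn_matrix hc
  have hFd : DifferentiableOn ℂ f (ball 0 1) := diffOn_matrix hd
  have hGc : ContinuousOn (fun z => Ring.inverse (f z)) (closedBall (0:ℂ) 1) := by
    intro z hz
    have h1 := NormedRing.inverse_continuousAt (hu z hz).unit
    rw [IsUnit.unit_spec] at h1
    exact h1.comp_continuousWithinAt (hFc z hz)
  have hGd : DifferentiableOn ℂ (fun z => Ring.inverse (f z)) (ball (0:ℂ) 1) := by
    intro z hz
    exact (hFd z hz).inverse (hu z (ball_subset_closedBall hz))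
  constructor
  · have h2 := (entryCLM i j).continuous.comp_continuousOn hGc
    simp only [hinv]
    exact h2
  · have h2 := (entryCLM i j).differentiable.comp_differentiableOn hGd
    simp only [hinv]
    exact h2

private lemma key_lemma {a b : ℂ → ℂ} {m : ℕ}
    (hac : ContinuousOn a (closedBall 0 1)) (had : DifferentiableOn ℂ a (ball 0 1))
    (hbc : ContinuousOn b (closedBall 0 1)) (hbd : DifferentiableOn ℂ b (ball 0 1))
    (hrel : ∀ z : ℂ, ‖z‖ = 1 → z ^ (m + 1) * a z = b z⁻¹) : a 0 = 0 := by
  have h0mem : (0:ℂ) ∈ ball (0:ℂ) 1 := by simp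
  have hCF := Complex.two_pi_I_inv_smul_circleIntegral_sub_inv_smul_of_differentiable_on_off_countable
      (Set.countable_empty) h0mem hac
      (fun x hx => had.differentiableAt (isOpen_ball.mem_nhds hx.1))
  have hT : (∮ z in C(0,1), z ^ m * b z) = 0 := by
    apply Complex.circleIntegral_eq_zero_of_differentiable_on_off_countable zero_le_one
      Set.countable_empty
    · exact (continuous_pow m).continuousOn.mul hbc
    · intro z hz
      exact ((differentiable_pow m) z).mul (hbd.differentiableAt (isOpen_ball.mem_nhds hz.1))
  have hS : (∮ z in C(0,1), (z - 0)⁻¹ • a z) = ∮ z in C(0,1), (z ^ (m + 2))⁻¹ * b z⁻¹ := by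
    apply circleIntegral.integral_congr zero_le_one
    intro z hz
    have hz1 : ‖z‖ = 1 := by simpa using hz
    have hz0 : z ≠ 0 := by intro h; rw [h] at hz1; simp at hz1
    have hr := hrel z hz1
    show (z - 0)⁻¹ • a z = (z ^ (m + 2))⁻¹ * b z⁻¹
    rw [sub_zero, smul_eq_mul, ← hr]
    field_simp
    ring
  have hne : ∀ θ : ℝ, circleMap 0 1 θ ≠ 0 := by
    intro θ h
    have := norm_circleMap_zero 1 θ
    rw [h] at this
    simp at this
  have hinv : ∀ θ : ℝ, circleMap 0 1 (-θ) = (circleMap 0 1 θ)⁻¹ := by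
    intro θ
    simp [circleMap, ← Complex.exp_neg]
  have hST : (∮ z in C(0,1), (z ^ (m + 2))⁻¹ * b z⁻¹) = ∮ z in C(0,1), z ^ m * b z := by
    simp only [circleIntegral, deriv_circleMap]
    set F : ℝ → ℂ := fun t => circleMap 0 1 t ^ (m + 1) * b (circleMap 0 1 t) * I with hF
    have h1 : ∀ θ : ℝ, (circleMap 0 1 θ * I) • ((circleMap 0 1 θ ^ (m + 2))⁻¹ * b (circleMap 0 1 θ)⁻¹)
        = F (-θ) := by
      intro θ
      rw [hF]
      simp only [hinv θ]
      have h0 := hne θ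
      rw [smul_eq_mul]
      field_simp
      rw [div_pow, one_pow, mul_one_div, eq_div_iff (pow_ne_zero _ h0)]
      ring
    have h2 : ∀ θ : ℝ, (circleMap 0 1 θ * I) • (circleMap 0 1 θ ^ m * b (circleMap 0 1 θ))
        = F θ := by
      intro θ
      rw [hF, smul_eq_mul]
      ring
    rw [intervalIntegral.integral_congr (g := fun θ : ℝ => F (-θ)) (fun θ _ => h1 θ),
      intervalIntegral.integral_congr (g := fun θ : ℝ => F θ) (fun θ _ => h2 θ)]
    rw [intervalIntegral.integral_comp_neg]
    have hper : ∀ θ : ℝ, F (θ - 2*π)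
        = F θ := by
      intro θ
      rw [hF]
      simp only [(periodic_circleMap 0 1).sub_eq]
    have := intervalIntegral.integral_comp_sub_right (a := 0) (b := 2*π) F (2*π)
    rw [intervalIntegral.integral_congr (fun θ _ => hper θ)] at this
    have e2 : -(2*π) = 0 - 2*π := by ring
    have e3 : (-0 : ℝ) = 2*π - 2*π := by ring
    rw [e2, e3, ← this]
  rw [hS, hST, hT, smul_zero] at hCF
  exact hCF.symm

private noncomputable def mA {n : ℕ} (gp : ℂ → Matrix (Fin n) (Fin n) ℂ) : ℂ → Matrix (Fin n) (Fin n) ℂ :=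
  fun z => gp z * (gp (star z))ᴴ

private noncomputable def mP {n : ℕ} (gm : ℂ → Matrix (Fin n) (Fin n) ℂ) : ℂ → Matrix (Fin n) (Fin n) ℂ :=
  fun w => (gm (star w))ᴴ * gm w

private noncomputable def mD {n : ℕ} (k : Fin n → ℤ) : ℂ → Matrix (Fin n) (Fin n) ℂ :=
  fun z => Matrix.diagonal (fun i => z ^ k i)

private lemma mA_entry {n : ℕ} (gp : ℂ → Matrix (Fin n) (Fin n) ℂ) (z : ℂ) (i j : Fin n) :
    mA gp z i j = ∑ l, gp z i l * star (gp (star z) j l) := by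
  simp [mA, Matrix.mul_apply, Matrix.conjTranspose_apply]

private lemma mP_entry {n : ℕ} (gm : ℂ → Matrix (Fin n) (Fin n) ℂ) (w : ℂ) (i j : Fin n) :
    mP gm w i j = ∑ l, star (gm (star w) l i) * gm w l j := by
  simp [mP, Matrix.mul_apply, Matrix.conjTranspose_apply]

private lemma sum_mul_star_ne {N : ℕ} (x : Fin N → ℂ) (hx : ∃ l, x l ≠ 0) :
    (∑ l, x l * star (x l)) ≠ 0 := by
  intro h
  have e : (∑ l, x l * star (x l)) = ((∑ l, Complex.normSq (x l) : ℝ) : ℂ) := by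
    push_cast
    refine Finset.sum_congr rfl fun l _ => ?_
    rw [Complex.star_def, Complex.mul_conj]
  rw [e, Complex.ofReal_eq_zero] at h
  obtain ⟨l, hl⟩ := hx
  have hz := (Finset.sum_eq_zero_iff_of_nonneg
    (fun l _ => Complex.normSq_nonneg (x l))).mp h l (Finset.mem_univ l)
  exact hl (Complex.normSq_eq_zero.mp hz)

private lemma sum_star_mul_ne {N : ℕ} (x : Fin N → ℂ) (hx : ∃ l, x l ≠ 0) :
    (∑ l, star (x l) * x l) ≠ 0 := by
  have := sum_mul_star_ne x hx
  simpa [mul_comm] using this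

/-- No loop of the form `x = x₋ · diag(z^{k₁},…,z^{kₙ}) · x₊`, with
`x₋ ∈ Λ⁻GL(n,ℂ)` (encoded via `gm` holomorphic on the disc, with `x₋` at `z` equal
to `gm` at `z⁻¹`), `x₊ ∈ Λ⁺GL(n,ℂ)`, and `k₁ ≥ ⋯ ≥ kₙ` integers not all zero, can
satisfy the reality condition on the unit circle. -/
theorem stmt_2 (n : ℕ) (k : Fin n → ℤ) (gm gp : ℂ → Matrix (Fin n) (Fin n) ℂ)
    (hm : HolDisc n gm) (hp : HolDisc n gp) (hmono : Antitone k) (hk : k ≠ 0) :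
    ¬ (∀ z : ℂ, ‖z‖ = 1 →
        (gm z⁻¹ * Matrix.diagonal (fun i => z ^ k i) * gp z) *
          (gm (star z)⁻¹ * Matrix.diagonal (fun i => (star z) ^ k i)
            * gp (star z)).conjTranspose = 1) := by
  intro hreal
  obtain ⟨hmc, hmd, hmu⟩ := hm
  obtain ⟨hpc, hpd, hpu⟩ := hp
  classical
  obtain ⟨i₀, hi₀⟩ : ∃ i, k i ≠ 0 := by
    by_contra h
    push_neg at h
    exact hk (funext fun i => h i)
  have h0cb : (0:ℂ) ∈ closedBall (0:ℂ) 1 := by simp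
  have hstar_mem : ∀ z : ℂ, z ∈ closedBall (0:ℂ) 1 → (star z : ℂ) ∈ closedBall (0:ℂ) 1 := by
    intro z hz
    simpa [mem_closedBall_zero_iff] using hz
  -- entrywise regularity of A and P
  have hAc : ∀ i j, ContinuousOn (fun z => mA gp z i j) (closedBall (0:ℂ) 1) := by
    intro i j
    have e : (fun z => mA gp z i j) = fun z => ∑ l, gp z i l * star (gp (star z) j l) :=
      funext fun z => mA_entry gp z i j
    rw [e]
    exact continuousOn_finset_sum _ fun l _ => (hpc i l).mul (contOn_conj_conj (hpc j l))
  have hAd : ∀ i j, DifferentiableOn ℂ (fun z => mA gp z i j) (ball (0:ℂ) 1) := by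
    intro i j
    have e : (fun z => mA gp z i j) = fun z => ∑ l, gp z i l * star (gp (star z) j l) :=
      funext fun z => mA_entry gp z i j
    rw [e]
    exact DifferentiableOn.fun_sum fun l _ => (hpd i l).mul (diffOn_conj_conj (hpd j l))
  have hPc : ∀ i j, ContinuousOn (fun w => mP gm w i j) (closedBall (0:ℂ) 1) := by
    intro i j
    have e : (fun w => mP gm w i j) = fun w => ∑ l, star (gm (star w) l i) * gm w l j :=
      funext fun w => mP_entry gm w i j
    rw [e]
    exact continuousOn_finset_sum _ fun l _ => (contOn_conj_conj (hmc l i)).mul (hmc l j)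
  have hPd : ∀ i j, DifferentiableOn ℂ (fun w => mP gm w i j) (ball (0:ℂ) 1) := by
    intro i j
    have e : (fun w => mP gm w i j) = fun w => ∑ l, star (gm (star w) l i) * gm w l j :=
      funext fun w => mP_entry gm w i j
    rw [e]
    exact DifferentiableOn.fun_sum fun l _ => (diffOn_conj_conj (hmd l i)).mul (hmd l j)
  have hAu : ∀ z ∈ closedBall (0:ℂ) 1, IsUnit (mA gp z) := by
    intro z hz
    simp only [mA]
    exact (hpu z hz).mul ((Matrix.isUnit_conjTranspose _).mpr (hpu (star z) (hstar_mem z hz)))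
  have hPu : ∀ w ∈ closedBall (0:ℂ) 1, IsUnit (mP gm w) := by
    intro w hw
    simp only [mP]
    exact ((Matrix.isUnit_conjTranspose _).mpr (hmu (star w) (hstar_mem w hw))).mul (hmu w hw)
  -- nonvanishing of the diagonal entries at 0
  have hrow : ∃ l, gp 0 i₀ l ≠ 0 := by
    by_contra h
    push_neg at h
    have hdet : (gp 0).det = 0 := Matrix.det_eq_zero_of_row_eq_zero i₀ h
    have hu := (Matrix.isUnit_iff_isUnit_det _).mp (hpu 0 h0cb)
    rw [hdet] at hu
    exact hu.ne_zero rfl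
  have hcol : ∃ l, gm 0 l i₀ ≠ 0 := by
    by_contra h
    push_neg at h
    have hdet : (gm 0).det = 0 := Matrix.det_eq_zero_of_column_eq_zero i₀ h
    have hu := (Matrix.isUnit_iff_isUnit_det _).mp (hmu 0 h0cb)
    rw [hdet] at hu
    exact hu.ne_zero rfl
  have hA0 : mA gp 0 i₀ i₀ ≠ 0 := by
    rw [mA_entry]
    simp only [star_zero]
    exact sum_mul_star_ne _ hrow
  have hP0 : mP gm 0 i₀ i₀ ≠ 0 := by
    rw [mP_entry]
    simp only [star_zero]
    exact sum_star_mul_ne _ hcol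
  -- circle facts
  have hnorm1 : ∀ z : ℂ, ‖z‖ = 1 → z ≠ 0 := by
    intro z hz h
    rw [h] at hz
    simp at hz
  -- the main relation on the circle
  have main : ∀ z : ℂ, ‖z‖ = 1 →
      gm z⁻¹ * mD k z * gp z * (gp (star z))ᴴ * mD k z * (gm (star z⁻¹))ᴴ = 1 := by
    intro z hz
    have h1 := hreal z hz
    rw [Matrix.conjTranspose_mul, Matrix.conjTranspose_mul] at h1
    have hdiag : (Matrix.diagonal (fun i => (star z) ^ k i))ᴴ
        = Matrix.diagonal (fun i => z ^ k i) := by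
      have hv : (star fun i => (star z) ^ k i) = fun i => z ^ k i := by
        funext i
        simp [star_zpow₀]
      rw [Matrix.diagonal_conjTranspose, hv]
    have hst : (star z)⁻¹ = star z⁻¹ := (star_inv₀ z).symm
    rw [hdiag, hst] at h1
    simpa only [mD, mul_assoc] using h1
  have rel2 : ∀ z : ℂ, ‖z‖ = 1 → (mP gm z⁻¹)⁻¹ = mD k z * (mA gp z * mD k z) := by
    intro z hz
    have t1 : gm z⁻¹ * (mD k z * (gp z * ((gp (star z))ᴴ * (mD k z * (gm (star z⁻¹))ᴴ)))) = 1 := by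
      simpa only [mul_assoc] using main z hz
    have t2 := mul_eq_one_comm.mp t1
    have t3 : mD k z * (mA gp z * mD k z) * mP gm z⁻¹ = 1 := by
      simpa only [mA, mP, mul_assoc] using t2
    exact Matrix.inv_eq_left_inv t3
  have rel1 : ∀ z : ℂ, ‖z‖ = 1 → (mA gp z)⁻¹ = mD k z * (mP gm z⁻¹ * mD k z) := by
    intro z hz
    have t1 : gm z⁻¹ * (mD k z * (gp z * ((gp (star z))ᴴ * (mD k z * (gm (star z⁻¹))ᴴ)))) = 1 := by
      simpa only [mul_assoc] using main z hz
    have t2 := mul_eq_one_comm.mp t1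
    have t3 : mD k z * (gp z * ((gp (star z))ᴴ * (mD k z * ((gm (star z⁻¹))ᴴ * gm z⁻¹)))) = 1 := by
      simpa only [mul_assoc] using t2
    have t4 := mul_eq_one_comm.mp t3
    have t5 : gp z * ((gp (star z))ᴴ * (mD k z * ((gm (star z⁻¹))ᴴ * (gm z⁻¹ * mD k z)))) = 1 := by
      simpa only [mul_assoc] using t4
    have t7 : mA gp z * (mD k z * (mP gm z⁻¹ * mD k z)) = 1 := by
      simpa only [mA, mP, mul_assoc] using t5
    exact Matrix.inv_eq_right_inv t7
  rcases hi₀.lt_or_gt with hneg | hpos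
  · -- k i₀ < 0 : use a = P entry, b = A⁻¹ entry
    obtain ⟨m, hm2⟩ : ∃ m : ℕ, ((m : ℤ) + 1) = -(2 * k i₀) := ⟨(-(2 * k i₀) - 1).toNat, by omega⟩
    have hbreg := inv_entry_regular hAc hAd hAu i₀ i₀
    have hrel : ∀ w : ℂ, ‖w‖ = 1 →
        w ^ (m + 1) * mP gm w i₀ i₀ = (fun z => (mA gp z)⁻¹ i₀ i₀) w⁻¹ := by
      intro w hw
      have hw0 := hnorm1 w hw
      have hwinv : ‖w⁻¹‖ = 1 := by rw [norm_inv, hw]; norm_num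
      have h := rel1 w⁻¹ hwinv
      rw [inv_inv] at h
      show w ^ (m + 1) * mP gm w i₀ i₀ = (mA gp w⁻¹)⁻¹ i₀ i₀
      rw [h]
      simp only [mD]
      rw [Matrix.diagonal_mul, Matrix.mul_diagonal]
      have hzp2 : (w:ℂ) ^ (m + 1) = (w⁻¹) ^ k i₀ * (w⁻¹) ^ k i₀ := by
        rw [_root_.inv_zpow, ← _root_.zpow_neg, ← zpow_add₀ hw0, ← zpow_natCast]
        congr 1
        push_cast
        omega
      rw [hzp2]
      ring
    exact hP0 (key_lemma (hPc i₀ i₀) (hPd i₀ i₀) hbreg.1 hbreg.2 hrel)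
  · -- k i₀ > 0 : use a = A entry, b = P⁻¹ entry
    obtain ⟨m, hm2⟩ : ∃ m : ℕ, ((m : ℤ) + 1) = 2 * k i₀ := ⟨(2 * k i₀ - 1).toNat, by omega⟩
    have hbreg := inv_entry_regular hPc hPd hPu i₀ i₀
    have hrel : ∀ z : ℂ, ‖z‖ = 1 →
        z ^ (m + 1) * mA gp z i₀ i₀ = (fun w => (mP gm w)⁻¹ i₀ i₀) z⁻¹ := by
      intro z hz
      have hz0 := hnorm1 z hz
      show z ^ (m + 1) * mA gp z i₀ i₀ = (mP gm z⁻¹)⁻¹ i₀ i₀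
      rw [rel2 z hz]
      simp only [mD]
      rw [Matrix.diagonal_mul, Matrix.mul_diagonal]
      have hzp2 : (z:ℂ) ^ (m + 1) = z ^ k i₀ * z ^ k i₀ := by
        rw [← zpow_add₀ hz0, ← zpow_natCast]
        congr 1
        push_cast
        omega
      rw [hzp2]
      ring
    exact hA0 (key_lemma (hAc i₀ i₀) (hAd i₀ i₀) hbreg.1 hbreg.2 hrel)
end

section
/- If a loop x : S¹ → GL(n,ℂ) satisfies the reality condition x(λ) = (conj(x(conj λ))ᵀ)⁻¹, then the winding number of λ ↦ det(x(λ)) around 0 is zero. -/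
/-- A continuous real function all of whose values lie in `2π·ℤ` is constant. -/
lemma aux_two_pi_int_const (g : ℝ → ℝ) (hg : Continuous g)
    (hk : ∀ t, ∃ k : ℤ, g t = 2 * Real.pi * k) : ∀ a b : ℝ, g a = g b := by
  intro a b
  by_contra hne
  obtain ⟨ka, hka⟩ := hk a
  obtain ⟨kb, hkb⟩ := hk b
  have hpi := Real.pi_pos
  have hkk : ka ≠ kb := by
    intro h; apply hne; rw [hka, hkb, h]
  set m : ℤ := min ka kb with hm
  set M : ℤ := max ka kb with hM
  have hmM : m + 1 ≤ M := by
    rcases lt_or_gt_of_ne hkk with h | h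
    · simp [hm, hM, min_eq_left h.le, max_eq_right h.le]; omega
    · simp [hm, hM, min_eq_right h.le, max_eq_left h.le]; omega
  have hv : Real.pi * (2 * m + 1) ∈ Set.uIcc (g a) (g b) := by
    rw [Set.mem_uIcc]
    have h1 : 2 * Real.pi * (m : ℝ) ≤ Real.pi * (2 * m + 1) := by nlinarith
    have h2 : Real.pi * (2 * m + 1) ≤ 2 * Real.pi * (M : ℝ) := by
      have : (m : ℝ) + 1 ≤ (M : ℝ) := by exact_mod_cast hmM
      nlinarith
    rcases le_total ka kb with h | h
    · left
      constructor
      · rw [hka]; simpa [hm, min_eq_left h] using h1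
      · rw [hkb]; simpa [hM, max_eq_right h] using h2
    · right
      constructor
      · rw [hkb]; simpa [hm, min_eq_right h] using h1
      · rw [hka]; simpa [hM, max_eq_left h] using h2
  obtain ⟨t, _, ht⟩ := intermediate_value_uIcc (hg.continuousOn (s := Set.uIcc a b)) hv
  obtain ⟨k, hkt⟩ := hk t
  rw [hkt] at ht
  have : (2 * k : ℝ) = (2 * m + 1 : ℝ) := by
    have := ht
    field_simp at this
    nlinarith [this]
  have : (2 * k : ℤ) = 2 * m + 1 := by exact_mod_cast this
  omega

/-- If a continuous loop `x : S¹ → GL(n,ℂ)` satisfies the reality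
condition `x(z) = (conj(x(conj z))ᵀ)⁻¹`, then the winding number of
`z ↦ det(x(z))` around `0` is zero.  The winding number is encoded via a
continuous argument lift `θ` of the determinant along the circle: any such lift
satisfies `θ(2π) = θ(0)`. -/
theorem stmt_4 (n : ℕ) (x : ℂ → Matrix (Fin n) (Fin n) ℂ)
    (hcont : ∀ i j, ContinuousOn (fun z => x z i j) (Metric.sphere 0 1))
    (hunit : ∀ z : ℂ, ‖z‖ = 1 → IsUnit (x z))
    (hreal : ∀ z : ℂ, ‖z‖ = 1 → x z * (x (star z)).conjTranspose = 1)
    (θ : ℝ → ℝ) (hθ : Continuous θ)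
    (hlift : ∀ t : ℝ, (x (Complex.exp (Complex.I * t))).det =
        ((‖(x (Complex.exp (Complex.I * t))).det‖ : ℝ) : ℂ) *
          Complex.exp (Complex.I * θ t)) :
    θ (2 * Real.pi) = θ 0 := by
  have hpi := Real.pi_pos
  -- basic facts about z(t) = exp(I t)
  have hznorm : ∀ t : ℝ, ‖Complex.exp (Complex.I * t)‖ = 1 := by
    intro t; simp [Complex.norm_exp]
  have hzstar : ∀ t : ℝ, star (Complex.exp (Complex.I * t))
      = Complex.exp (Complex.I * ((-t : ℝ) : ℂ)) := by
    intro t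
    rw [show (star (Complex.exp (Complex.I * t)) : ℂ)
        = (starRingEnd ℂ) (Complex.exp (Complex.I * t)) from rfl, ← Complex.exp_conj]
    push_cast
    congr 1
    simp
  have hzper : ∀ t : ℝ, Complex.exp (Complex.I * ((t + 2 * Real.pi : ℝ) : ℂ))
      = Complex.exp (Complex.I * t) := by
    intro t
    push_cast
    rw [mul_add, Complex.exp_add,
      show Complex.I * (2 * (Real.pi : ℂ)) = 2 * Real.pi * Complex.I by ring,
      Complex.exp_two_pi_mul_I, mul_one]
  -- determinants are nonzero; write D t for the determinant, r t for its abs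
  set D : ℝ → ℂ := fun t => (x (Complex.exp (Complex.I * t))).det with hD
  have hDne : ∀ t : ℝ, D t ≠ 0 := by
    intro t
    have := (hunit _ (hznorm t))
    exact (Matrix.isUnit_iff_isUnit_det _).mp this |>.ne_zero
  have hrpos : ∀ t : ℝ, (0 : ℝ) < ‖D t‖ := by
    intro t; exact norm_pos_iff.mpr (hDne t)
  -- the determinant reality condition
  have hdet : ∀ t : ℝ, D t * star (D (-t)) = 1 := by
    intro t
    have h := congrArg Matrix.det (hreal _ (hznorm t))
    rw [Matrix.det_mul, Matrix.det_one, Matrix.det_conjTranspose, hzstar t] at h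
    simpa [hD] using h
  -- from hlift: the symmetry relation e^{iθ t} = e^{iθ (-t)}
  have hsym : ∀ t : ℝ, Complex.exp (Complex.I * θ t) = Complex.exp (Complex.I * θ (-t)) := by
    intro t
    have h := hdet t
    have h1 : D t = ((‖D t‖ : ℝ) : ℂ) * Complex.exp (Complex.I * θ t) := hlift t
    have h2 : D (-t) = ((‖D (-t)‖ : ℝ) : ℂ) * Complex.exp (Complex.I * θ (-t)) :=
      hlift (-t)
    rw [h1, h2] at h
    have hstar : star (((‖D (-t)‖ : ℝ) : ℂ) * Complex.exp (Complex.I * θ (-t)))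
        = ((‖D (-t)‖ : ℝ) : ℂ) * Complex.exp (-(Complex.I * θ (-t))) := by
      rw [star_mul']
      congr 1
      · simp
      · rw [show (star (Complex.exp (Complex.I * θ (-t))) : ℂ)
            = (starRingEnd ℂ) (Complex.exp (Complex.I * θ (-t))) from rfl, ← Complex.exp_conj]
        congr 1
        simp
    rw [hstar] at h
    -- take absolute values to see r t * r (-t) = 1
    have habs : ‖D t‖ * ‖D (-t)‖ = 1 := by
      have h' := congrArg (‖·‖) h
      simpa [norm_mul, Complex.norm_exp] using h'
    -- cancel the positive reals
    have : Complex.exp (Complex.I * θ t) * Complex.exp (-(Complex.I * θ (-t))) = 1 := by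
      have hc : (((‖D t‖ : ℝ) : ℂ) * ((‖D (-t)‖ : ℝ) : ℂ)) *
          (Complex.exp (Complex.I * θ t) * Complex.exp (-(Complex.I * θ (-t)))) = 1 := by
        rw [← h]; ring
      rw [show (((‖D t‖ : ℝ) : ℂ) * ((‖D (-t)‖ : ℝ) : ℂ))
          = ((‖D t‖ * ‖D (-t)‖ : ℝ) : ℂ) by push_cast; ring,
        habs] at hc
      simpa using hc
    rw [← Complex.exp_add] at this
    have := Complex.exp_eq_one_iff.mp this
    obtain ⟨k, hk⟩ := this
    rw [Complex.exp_eq_exp_iff_exists_int]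
    exact ⟨k, by rw [← hk]; ring⟩
  -- from hlift and periodicity of z: e^{iθ (t+2π)} = e^{iθ t}
  have hper : ∀ t : ℝ, Complex.exp (Complex.I * θ (t + 2 * Real.pi))
      = Complex.exp (Complex.I * θ t) := by
    intro t
    have h1 := hlift (t + 2 * Real.pi)
    rw [hzper t] at h1
    have h1' : D t = ((‖D t‖ : ℝ) : ℂ) * Complex.exp (Complex.I * θ (t + 2 * Real.pi)) := h1
    have h2 : D t = ((‖D t‖ : ℝ) : ℂ) * Complex.exp (Complex.I * θ t) := hlift t
    have hne : (((‖D t‖ : ℝ) : ℂ)) ≠ 0 := by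
      simp only [ne_eq, Complex.ofReal_eq_zero]
      exact (hrpos t).ne'
    exact mul_left_cancel₀ hne (h1'.symm.trans h2)
  -- turn exp equalities into 2πℤ statements
  have key : ∀ a b : ℝ, Complex.exp (Complex.I * a) = Complex.exp (Complex.I * b) →
      ∃ k : ℤ, a - b = 2 * Real.pi * k := by
    intro a b hab
    obtain ⟨k, hk⟩ := Complex.exp_eq_exp_iff_exists_int.mp hab
    refine ⟨k, ?_⟩
    have h := congrArg Complex.im hk
    have h2 : a = b + k * (2 * Real.pi) := by simpa using h
    linarith
  -- g t = θ t - θ (-t) is constant, equal to its value 0 at t = 0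
  have hg0 : ∀ t : ℝ, θ t = θ (-t) := by
    intro t
    have hconst := aux_two_pi_int_const (fun t => θ t - θ (-t))
      (hθ.sub (hθ.comp continuous_neg)) (fun t => key _ _ (hsym t)) t 0
    simp only [neg_zero, sub_self] at hconst
    linarith [hconst]
  -- p t = θ (t + 2π) - θ t is constant
  have hp := aux_two_pi_int_const (fun t => θ (t + 2 * Real.pi) - θ t)
    ((hθ.comp (continuous_id.add continuous_const)).sub hθ) (fun t => key _ _ (hper t))
    0 (-(2 * Real.pi))
  simp only [zero_add, neg_add_cancel] at hp
  have h1 : θ (2 * Real.pi) = θ (-(2 * Real.pi)) := by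
    have := hg0 (2 * Real.pi); simpa using this
  linarith [hp, h1]
end

section
/- Suppose H is a topological group with closed subgroups H⁻, H⁺ such that multiplication H⁻ × H⁺ → H is a homeomorphism, and suppose the constant subgroup H⁰ := H⁻ ∩ H⁺ is a deformation retract of both H⁻ and H⁺. Then H⁰ is a deformation retract of H; in particular, if H⁰ is connected then H is connected. -/
/-- `Γ` is a deformation retraction of `X` onto the subset `A`. -/
def IsDefRetract {X : Type*} [TopologicalSpace X] (A : Set X)
    (Γ : unitInterval → X → X) : Prop :=
  Continuous (fun p : unitInterval × X => Γ p.1 p.2) ∧ (∀ x, Γ 1 x = x) ∧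
    (∀ x, Γ 0 x ∈ A) ∧ ∀ t : unitInterval, ∀ a ∈ A, Γ t a = a

/-- If `H` is a topological group with closed subgroups `H⁻`, `H⁺`
such that multiplication `H⁻ × H⁺ → H` is a homeomorphism, and the constant
subgroup `H⁰ = H⁻ ∩ H⁺` is a deformation retract of both `H⁻` and `H⁺`, then
`H⁰` is a deformation retract of `H`; in particular, if `H⁰` is connected then
`H` is connected. -/
theorem stmt_11 (H : Type*) [Group H] [TopologicalSpace H] [IsTopologicalGroup H]
    (Hm Hp : Subgroup H) (hmc : IsClosed (Hm : Set H)) (hpc : IsClosed (Hp : Set H))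
    (e : (↥Hm × ↥Hp) ≃ₜ H) (he : ∀ p : ↥Hm × ↥Hp, e p = (p.1 : H) * (p.2 : H))
    (Γm : unitInterval → ↥Hm → ↥Hm)
    (hΓm : IsDefRetract {x : ↥Hm | (x : H) ∈ Hp} Γm)
    (Γp : unitInterval → ↥Hp → ↥Hp)
    (hΓp : IsDefRetract {x : ↥Hp | (x : H) ∈ Hm} Γp) :
    (∃ Γ : unitInterval → H → H, IsDefRetract ((Hm : Set H) ∩ (Hp : Set H)) Γ) ∧
      (IsConnected ((Hm : Set H) ∩ (Hp : Set H)) → ConnectedSpace H) := by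
  set A : Set H := (Hm : Set H) ∩ (Hp : Set H) with hA
  set Γ : unitInterval → H → H :=
    fun t h => (Γm t (e.symm h).1 : H) * (Γp t (e.symm h).2 : H) with hΓdef
  have hcont : Continuous (fun p : unitInterval × H => Γ p.1 p.2) := by
    apply Continuous.mul
    · exact continuous_subtype_val.comp (hΓm.1.comp
        ((continuous_fst).prodMk ((continuous_fst.comp (e.continuous_symm.comp continuous_snd)))))
    · exact continuous_subtype_val.comp (hΓp.1.comp
        ((continuous_fst).prodMk ((continuous_snd.comp (e.continuous_symm.comp continuous_snd)))))
  have hone : ∀ x, Γ 1 x = x := by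
    intro x
    simp only [hΓdef, hΓm.2.1, hΓp.2.1]
    rw [← he (e.symm x), e.apply_symm_apply]
  have hzero : ∀ x, Γ 0 x ∈ A := by
    intro x
    constructor
    · exact Hm.mul_mem (Γm 0 (e.symm x).1).2 (hΓp.2.2.1 (e.symm x).2)
    · exact Hp.mul_mem (hΓm.2.2.1 (e.symm x).1) (Γp 0 (e.symm x).2).2
  have hfix : ∀ t : unitInterval, ∀ a ∈ A, Γ t a = a := by
    intro t a ha
    have hsymm : e.symm a = (⟨a, ha.1⟩, 1) := by
      apply e.injective
      rw [e.apply_symm_apply, he]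
      simp
    simp only [hΓdef, hsymm]
    rw [hΓm.2.2.2 t ⟨a, ha.1⟩ ha.2, hΓp.2.2.2 t 1 (by simpa using Hm.one_mem)]
    simp
  refine ⟨⟨Γ, hcont, hone, hzero, hfix⟩, ?_⟩
  rintro ⟨⟨a0, ha0⟩, hApre⟩
  have hS : ∀ x : H, IsPreconnected ((Set.range fun t => Γ t x) ∪ A) := by
    intro x
    apply IsPreconnected.union (Γ 0 x)
    · exact ⟨0, rfl⟩
    · exact hzero x
    · exact isPreconnected_range (hcont.comp (Continuous.prodMk_left x))
    · exact hApre
  have huniv : (Set.univ : Set H) = ⋃ x : H, ((Set.range fun t => Γ t x) ∪ A) := by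
    apply Set.eq_of_subset_of_subset
    · intro x _
      exact Set.mem_iUnion.2 ⟨x, Or.inl ⟨1, hone x⟩⟩
    · exact fun _ _ => trivial
  have : PreconnectedSpace H := by
    constructor
    rw [huniv]
    apply isPreconnected_iUnion
    · exact ⟨a0, Set.mem_iInter.2 fun x => Or.inr ha0⟩
    · exact hS
  exact ⟨⟨a0⟩⟩
end
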